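/- Let c > 0 and γ ∈ (6/5, 4/3]. Suppose Y : [0, ∞) → ℝ is C¹, a : [0, ∞) → ℝ is C¹ with a(t) ≥ c₀ > 0, and Y'(t) ≤ 3(3-2γ)·Y(t)/(1+t) + 2μ·(1+t)·(d/dt)(a(t)³) for all t ≥ 0, where μ > 0. Define a₁(t) = max_{s ∈ [0,t]} a(s). Then there exists a constant C > 0 (depending on Y(0), μ, c₀, γ) such that Y(t) ≤ C·(1+t)^(3(3-2γ))·a₁(t)³ for all t ≥ 0. -/

import Mathlib

/-- Integrating the differential inequality
`Y' ≤ 3(3-2γ)Y/(1+t) + 2μ(1+t)(a³)'` yields `Y(t) ≤ C (1+t)^(3(3-2γ)) a₁(t)³`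
where `a₁(t) = max_{[0,t]} a`. -/
theorem stmt_13 (γ μ c₀ : ℝ) (hγ1 : 6/5 < γ) (hγ2 : γ ≤ 4/3) (hμ : 0 < μ) (hc : 0 < c₀)
    (Y Y' a a' : ℝ → ℝ)
    (hY : ∀ t, 0 ≤ t → HasDerivAt Y (Y' t) t)
    (ha : ∀ t, 0 ≤ t → HasDerivAt a (a' t) t)
    (hac : ∀ t, 0 ≤ t → c₀ ≤ a t)
    (hineq : ∀ t, 0 ≤ t →
      Y' t ≤ 3*(3 - 2*γ) * Y t / (1 + t) + 2*μ*(1 + t) * (3 * (a t)^2 * a' t)) :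
    ∃ C : ℝ, 0 < C ∧ ∀ t, 0 ≤ t →
      Y t ≤ C * (1 + t) ^ (3*(3 - 2*γ)) * (sSup (a '' Set.Icc 0 t))^3 := by
  set α : ℝ := 3*(3 - 2*γ) with hαdef
  have hα1 : (1:ℝ) ≤ α := by rw [hαdef]; linarith
  refine ⟨|Y 0| / c₀^3 + 4*μ, by positivity, ?_⟩
  intro t ht
  set S : ℝ := sSup (a '' Set.Icc 0 t) with hSdef
  set M : ℝ := S^3 with hMdef
  have hbdd : BddAbove (a '' Set.Icc 0 t) := by
    apply (isCompact_Icc.image_of_continuousOn ?_).bddAbove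
    exact fun s hs => ((ha s hs.1).continuousAt).continuousWithinAt
  have hsup_ge : ∀ s ∈ Set.Icc (0:ℝ) t, a s ≤ S := fun s hs => le_csSup hbdd ⟨s, hs, rfl⟩
  have hSc : c₀ ≤ S := le_trans (hac 0 le_rfl) (hsup_ge 0 ⟨le_rfl, ht⟩)
  have hMc : c₀^3 ≤ M := by
    rw [hMdef]; exact pow_le_pow_left₀ hc.le hSc 3
  have hM0 : (0:ℝ) < M := lt_of_lt_of_le (by positivity) hMc
  have hacube : ∀ s ∈ Set.Icc (0:ℝ) t, (a s)^3 ≤ M := fun s hs => by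
    rw [hMdef]; exact pow_le_pow_left₀ (le_trans hc.le (hac s hs.1)) (hsup_ge s hs) 3
  set W : ℝ → ℝ := fun s =>
      Y s * (1+s)^(-α) - 2*μ*(1+s)^(1-α) * (a s)^3 - 2*μ*M*(1 - (1+s)^(1-α)) with hWdef
  have hW' : ∀ x, 0 ≤ x → HasDerivAt W
      (Y' x * (1+x)^(-α) + Y x * (-α * (1+x)^(-α-1))
        - (2*μ*((1-α)*(1+x)^(-α)) * (a x)^3 + 2*μ*(1+x)^(1-α) * (3*(a x)^2 * a' x))
        - 2*μ*M*(0 - (1-α)*(1+x)^(-α))) x := by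
    intro x hx
    have h1x : (0:ℝ) < 1 + x := by linarith
    have hbase : HasDerivAt (fun s : ℝ => 1 + s) 1 x := by
      simpa using (hasDerivAt_id x).const_add 1
    have hp : HasDerivAt (fun s : ℝ => (1+s)^(-α)) (-α * (1+x)^(-α-1)) x := by
      have h := hbase.rpow_const (p := -α) (Or.inl h1x.ne')
      convert h using 1; ring
    have hq : HasDerivAt (fun s : ℝ => (1+s)^(1-α)) ((1-α) * (1+x)^(-α)) x := by
      have h := hbase.rpow_const (p := 1-α) (Or.inl h1x.ne')
      have : (1:ℝ) - α - 1 = -α := by ring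
      rw [this] at h
      convert h using 1; ring
    have hcube : HasDerivAt (fun s => (a s)^3) (3*(a x)^2 * a' x) x := by
      have h := (ha x hx).pow 3
      norm_num at h
      exact h
    exact (((hY x hx).mul hp).sub (((hq.const_mul (2*μ))).mul hcube)).sub
      (((hasDerivAt_const x (1:ℝ)).sub hq).const_mul (2*μ*M))
  have hWanti : AntitoneOn W (Set.Icc 0 t) := by
    apply antitoneOn_of_deriv_nonpos (convex_Icc 0 t)
    · exact fun s hs => (hW' s hs.1).continuousAt.continuousWithinAt
    · rw [interior_Icc]
      exact fun x hx => ((hW' x hx.1.le).differentiableAt).differentiableWithinAt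
    · rw [interior_Icc]
      intro x hx
      rw [(hW' x hx.1.le).deriv]
      have hx0 : (0:ℝ) ≤ x := hx.1.le
      have h1x : (0:ℝ) < 1 + x := by linarith
      have hP : (0:ℝ) < (1+x)^(-α) := Real.rpow_pos_of_pos h1x _
      have hAM : (a x)^3 ≤ M := hacube x ⟨hx0, hx.2.le⟩
      have key := mul_le_mul_of_nonneg_right (hineq x hx0) hP.le
      have e1 : (1+x)^(-α-1) = (1+x)^(-α) / (1+x) := by
        rw [Real.rpow_sub h1x, Real.rpow_one]
      have e2 : (1+x)^(1-α) = (1+x) * (1+x)^(-α) := by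
        rw [Real.rpow_sub h1x, Real.rpow_one, Real.rpow_neg h1x.le, div_eq_mul_inv]
      have h2 : 0 ≤ 2*μ*(α-1)*(1+x)^(-α)*(M - (a x)^3) :=
        mul_nonneg (mul_nonneg (mul_nonneg (by linarith) (by linarith)) hP.le) (by linarith)
      rw [e1, e2]
      have e3 : α * Y x / (1+x) * ((1+x)^(-α)) = α * (Y x * ((1+x)^(-α) / (1+x))) := by
        field_simp
      nlinarith [key, h2]
  have hWt : W t ≤ W 0 := hWanti ⟨le_rfl, ht⟩ ⟨ht, le_rfl⟩ ht
  have h1t : (0:ℝ) < 1 + t := by linarith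
  have hQ1 : (1+t)^(1-α) ≤ 1 :=
    Real.rpow_le_one_of_one_le_of_nonpos (by linarith) (by linarith)
  have hQ0 : (0:ℝ) < (1+t)^(1-α) := Real.rpow_pos_of_pos h1t _
  have hW0 : W 0 = Y 0 - 2*μ*(a 0)^3 := by
    simp [hWdef, Real.one_rpow]
  have ha0 : (0:ℝ) < (a 0)^3 := pow_pos (lt_of_lt_of_le hc (hac 0 le_rfl)) 3
  have hat : (a t)^3 ≤ M := hacube t ⟨ht, le_rfl⟩
  have hWtexp : W t = Y t * (1+t)^(-α) - 2*μ*(1+t)^(1-α) * (a t)^3 - 2*μ*M*(1 - (1+t)^(1-α)) := rfl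
  have hbound : Y t * (1+t)^(-α) ≤ (|Y 0| / c₀^3 + 4*μ) * M := by
    have hY0 : Y 0 ≤ |Y 0| / c₀^3 * M := by
      have h1 : Y 0 ≤ |Y 0| := le_abs_self _
      have h2 : |Y 0| ≤ |Y 0| / c₀^3 * M := by
        rw [div_mul_eq_mul_div, le_div_iff₀ (by positivity)]
        exact mul_le_mul_of_nonneg_left hMc (abs_nonneg _)
      linarith
    have hterm : 2*μ*(1+t)^(1-α) * (a t)^3 ≤ 2*μ*M := by
      have hat0 : (0:ℝ) ≤ (a t)^3 := pow_nonneg (le_trans hc.le (hac t ht)) 3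
      have : (1+t)^(1-α) * (a t)^3 ≤ 1 * M :=
        mul_le_mul hQ1 hat hat0 zero_le_one
      nlinarith
    have h2mM : (0:ℝ) < 2*μ*M := mul_pos (by linarith) hM0
    have hterm2 : 2*μ*M*(1 - (1+t)^(1-α)) ≤ 2*μ*M := by
      nlinarith [mul_pos h2mM hQ0]
    rw [hWtexp, hW0] at hWt
    nlinarith [hWt, hY0, hterm, hterm2, mul_pos hμ ha0]
  have hpow : (0:ℝ) < (1+t)^α := Real.rpow_pos_of_pos h1t _
  have hYt : Y t = Y t * (1+t)^(-α) * (1+t)^α := by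
    rw [Real.rpow_neg h1t.le]
    field_simp
  rw [hYt]
  calc Y t * (1+t)^(-α) * (1+t)^α ≤ (|Y 0| / c₀^3 + 4*μ) * M * (1+t)^α :=
        mul_le_mul_of_nonneg_right hbound hpow.le
    _ = (|Y 0| / c₀^3 + 4*μ) * (1+t)^α * M := by ring
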